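/- Let K be a number field with ring of integers O_K and 𝔪 a nonzero ideal of O_K with absolute norm n. Let χ : (O_K/𝔪)ˣ → ℂˣ be a group homomorphism and let θ be a primitive Dirichlet character of conductor d (a Dirichlet character modulo d whose conductor equals d). Suppose that for every integer m, the value θ(m) (with θ extended by zero to integers not coprime to d) equals the value at the image of m in O_K/𝔪 of the extension-by-zero of χ (i.e., χ of that image if it is a unit, and 0 otherwise). Then d divides n. -/

import Mathlib

open NumberField
open scoped Classical

set_option synthInstance.maxHeartbeats 1000000 in
/-- If a character `χ` of `(𝓞 K ⧸ 𝔪)ˣ`, extended by zero, agrees on all integers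
with a primitive Dirichlet character `θ` of conductor `d` (extended by zero), then
`d` divides the absolute norm `n` of `𝔪`. -/
theorem conductor_dvd_absNorm_of_restriction (K : Type*) [Field K] [NumberField K]
    (𝔪 : Ideal (𝓞 K)) (h𝔪 : 𝔪 ≠ 0) (n : ℕ) (hn : Ideal.absNorm 𝔪 = n)
    (d : ℕ) (θ : DirichletCharacter ℂ d) (hθ : θ.IsPrimitive)
    (χ : ((𝓞 K) ⧸ 𝔪)ˣ →* ℂˣ)
    (h : ∀ m : ℤ, θ ((m : ℤ) : ZMod d) =
      if hu : IsUnit (Ideal.Quotient.mk 𝔪 (m : 𝓞 K)) then (χ hu.unit : ℂ) else 0) :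
    d ∣ n := by
  have hn0 : n ≠ 0 := by
    rw [← hn, ne_eq, Ideal.absNorm_eq_zero_iff]
    exact h𝔪
  -- extension by zero of χ
  set F : ((𝓞 K) ⧸ 𝔪) → ℂ := fun x => if hu : IsUnit x then (χ hu.unit : ℂ) else 0 with hF
  have h' : ∀ m : ℤ, θ ((m : ℤ) : ZMod d) = F (Ideal.Quotient.mk 𝔪 (m : 𝓞 K)) := h
  -- periodicity with period n
  have key : ∀ m m' : ℤ, (n : ℤ) ∣ m - m' →
      θ ((m : ℤ) : ZMod d) = θ ((m' : ℤ) : ZMod d) := by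
    rintro m m' ⟨t, ht⟩
    have hmem : ((m - m' : ℤ) : 𝓞 K) ∈ 𝔪 := by
      rw [ht]
      push_cast
      refine 𝔪.mul_mem_right _ ?_
      have := Ideal.absNorm_mem 𝔪
      rw [hn] at this
      exact_mod_cast this
    have hmk : Ideal.Quotient.mk 𝔪 ((m : ℤ) : 𝓞 K) = Ideal.Quotient.mk 𝔪 ((m' : ℤ) : 𝓞 K) := by
      rw [Ideal.Quotient.eq]
      simpa using hmem
    rw [h', h', hmk]
  rcases Nat.eq_zero_or_pos d with hd0 | hdpos
  · -- d = 0 is impossible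
    exfalso
    subst hd0
    have h1 : θ (((1 + n : ℕ) : ℤ) : ZMod 0) = θ ((1 : ℤ) : ZMod 0) :=
      key _ _ ⟨1, by simp only [Int.ofNat_eq_natCast]; push_cast; ring⟩
    have h2 : ¬ IsUnit (((1 + n : ℕ) : ZMod 0)) := by
      rw [ZMod.isUnit_iff_coprime]
      simp [Nat.coprime_zero_right, hn0]
    have h3 : θ 1 = 0 := h1.symm.trans (MulChar.map_nonunit θ (by exact_mod_cast h2))
    simp at h3
  · set g := Nat.gcd d n with hg
    have hgd : g ∣ d := Nat.gcd_dvd_left d n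
    have hgn : g ∣ n := Nat.gcd_dvd_right d n
    haveI : NeZero d := ⟨hdpos.ne'⟩
    have hft : θ.FactorsThrough g := by
      rw [DirichletCharacter.factorsThrough_iff_ker_unitsMap hgd]
      intro u hu
      rw [MonoidHom.mem_ker] at hu ⊢
      set m : ℤ := (((u : ZMod d).val : ℕ) : ℤ) with hm
      have hval : ((m : ℤ) : ZMod d) = (u : ZMod d) := by
        simp [hm, ZMod.natCast_val, ZMod.cast_id]
      have hcastg : ((m : ℤ) : ZMod g) = 1 := by
        have : (ZMod.castHom hgd (ZMod g)) (u : ZMod d) = 1 := by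
          have := congrArg Units.val hu
          simpa [ZMod.unitsMap_def] using this
        rw [hm]
        push_cast
        rw [ZMod.natCast_val]
        exact this
      have hgm : (g : ℤ) ∣ m - 1 := by
        have : ((m - 1 : ℤ) : ZMod g) = 0 := by push_cast [hcastg]; ring
        exact (ZMod.intCast_zmod_eq_zero_iff_dvd _ _).mp this
      obtain ⟨c, hc⟩ := hgm
      have hB := Nat.gcd_eq_gcd_ab d n
      set A := Nat.gcdA d n
      set B := Nat.gcdB d n
      have hmsplit : m - c * ((n : ℤ) * B) = 1 + c * ((d : ℤ) * A) := by
        have : m - 1 = c * ((d : ℤ) * A + (n : ℤ) * B) := by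
          rw [← hB, ← hg]; linarith [hc]
        linarith [this]
      have step1 : θ ((m : ℤ) : ZMod d) = θ (((m - c * ((n : ℤ) * B) : ℤ)) : ZMod d) :=
        key _ _ ⟨c * B, by ring⟩
      have step2 : (((m - c * ((n : ℤ) * B) : ℤ)) : ZMod d) = 1 := by
        rw [hmsplit]
        push_cast
        simp [ZMod.natCast_self]
      have : θ ((m : ℤ) : ZMod d) = 1 := by
        rw [step1, step2, map_one]
      refine Units.ext ?_
      rw [MulChar.coe_toUnitHom]
      rw [← hval]
      simpa using this
    have hmem : g ∈ DirichletCharacter.conductorSet θ :=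
      (DirichletCharacter.mem_conductorSet_iff θ).mpr hft
    have hle : d ≤ g := by
      have := Nat.sInf_le hmem
      rwa [show sInf (DirichletCharacter.conductorSet θ) = θ.conductor from rfl, hθ] at this
    have hgd' : g = d := le_antisymm (Nat.le_of_dvd hdpos hgd) hle
    rw [← hgd']
    exact hgn
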